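/- Full correctness of the recursive algorithm: if K_{M} = Ĝ_M⁻¹ A_M and the algorithm computes K_{M+1} via the Sherman–Morrison update of Ĝ_M⁻¹ together with A_{M+1} = A_M + ψᵀφ, then K_{M+1} = Ĝ_{M+1}⁻¹ A_{M+1}, where Ĝ_{M+1} = Ĝ_M + ψᵀψ. I.e., the recursively updated operator equals the batch-computed regularized Koopman operator. -/

import Mathlib

open Matrix

/-- Full correctness of the recursive algorithm: the Sherman–Morrison-updated operator
equals the batch-computed regularized Koopman operator. -/
theorem recursive_koopman_correct {K : ℕ} (Gm Am : Matrix (Fin K) (Fin K) ℝ)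
    (hGm : Gm.PosDef) (ψ φ : Matrix (Fin 1) (Fin K) ℝ) :
    (Gm⁻¹ - (1 + (ψ * Gm⁻¹ * ψᵀ) 0 0)⁻¹ • (Gm⁻¹ * ψᵀ * ψ * Gm⁻¹)) * (Am + ψᵀ * φ)
      = (Gm + ψᵀ * ψ)⁻¹ * (Am + ψᵀ * φ) := by
  set c : ℝ := 1 + (ψ * Gm⁻¹ * ψᵀ) 0 0 with hc
  have hinv : Gm⁻¹.PosDef := hGm.inv
  have hψψ : (ψᵀ * ψ).PosSemidef := by
    simpa using posSemidef_conjTranspose_mul_self ψ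
  have hG' : (Gm + ψᵀ * ψ).PosDef := hGm.add_posSemidef hψψ
  have hcpos : (0:ℝ) < c := by
    have : (0:ℝ) ≤ (ψ * Gm⁻¹ * ψᵀ) 0 0 := by
      have h := hinv.posSemidef.dotProduct_mulVec_nonneg (ψ 0)
      have : (ψ * Gm⁻¹ * ψᵀ) 0 0 = (star (ψ 0)) ⬝ᵥ (Gm⁻¹ *ᵥ (ψ 0)) := by
        simp only [Matrix.mul_apply, mulVec, dotProduct, transpose_apply, star_trivial,
          Finset.sum_mul]
        rw [Finset.sum_comm]
        simp [Finset.mul_sum, mul_assoc]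
      rw [this]
      exact_mod_cast h
    rw [hc]; linarith
  have hcne : c ≠ 0 := ne_of_gt hcpos
  -- 1x1 matrix is scalar
  have hscal : ψ * Gm⁻¹ * ψᵀ = (c - 1) • (1 : Matrix (Fin 1) (Fin 1) ℝ) := by
    ext i j
    fin_cases i; fin_cases j
    simp [hc]
  have hGinv : Gm⁻¹ * Gm = 1 := nonsing_inv_mul Gm (isUnit_iff_ne_zero.mpr hGm.det_pos.ne')
  suffices h : (Gm⁻¹ - c⁻¹ • (Gm⁻¹ * ψᵀ * ψ * Gm⁻¹)) * (Gm + ψᵀ * ψ) = 1 by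
    rw [inv_eq_left_inv h]
  have key : Gm⁻¹ * ψᵀ * (ψ * Gm⁻¹ * ψᵀ) * ψ = (c - 1) • (Gm⁻¹ * ψᵀ * ψ) := by
    rw [hscal]
    simp [Matrix.mul_smul, Matrix.smul_mul, Matrix.mul_assoc]
  calc (Gm⁻¹ - c⁻¹ • (Gm⁻¹ * ψᵀ * ψ * Gm⁻¹)) * (Gm + ψᵀ * ψ)
      = Gm⁻¹ * Gm + Gm⁻¹ * (ψᵀ * ψ)
        - c⁻¹ • (Gm⁻¹ * ψᵀ * ψ * (Gm⁻¹ * Gm) + Gm⁻¹ * ψᵀ * (ψ * Gm⁻¹ * ψᵀ) * ψ) := by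
        rw [Matrix.sub_mul, Matrix.mul_add, Matrix.smul_mul, Matrix.mul_add]
        simp only [Matrix.mul_assoc, smul_add]
    _ = 1 + Gm⁻¹ * (ψᵀ * ψ) - c⁻¹ • (Gm⁻¹ * ψᵀ * ψ + (c - 1) • (Gm⁻¹ * ψᵀ * ψ)) := by
        rw [hGinv, key, Matrix.mul_one]
    _ = 1 := by
        rw [smul_add, smul_smul, ← add_smul]
        have : c⁻¹ + c⁻¹ * (c - 1) = 1 := by field_simp; ring
        rw [this, one_smul]
        simp [Matrix.mul_assoc]
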